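/- Let F be a field of characteristic 2 in which the squaring map is not surjective. Then there exists a 3×3 symmetric matrix over F that is not triangularizable over F; hence for every n ≥ 3, the space of n×n symmetric matrices over F is not weakly triangularizable. -/

import Mathlib

/-- A square matrix is triangularizable over the ground field when it is
similar over that field to an upper triangular matrix. -/
def Matrix.Triangularizable {n : ℕ} {F : Type*} [Field F]
    (M : Matrix (Fin n) (Fin n) F) : Prop :=
  ∃ P : (Matrix (Fin n) (Fin n) F)ˣ,
    ((P : Matrix (Fin n) (Fin n) F) * M * ((P⁻¹ : (Matrix (Fin n) (Fin n) F)ˣ) :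
      Matrix (Fin n) (Fin n) F)).BlockTriangular id

open Polynomial Matrix

/-- Characteristic polynomial is invariant under conjugation by a unit. -/
lemma aux_charpoly_conj {n : ℕ} {F : Type*} [Field F] (P : (Matrix (Fin n) (Fin n) F)ˣ)
    (M : Matrix (Fin n) (Fin n) F) :
    ((P : Matrix (Fin n) (Fin n) F) * M *
      ((P⁻¹ : (Matrix (Fin n) (Fin n) F)ˣ) : Matrix (Fin n) (Fin n) F)).charpoly
      = M.charpoly := by
  set p : Matrix (Fin n) (Fin n) F[X] := (P : Matrix (Fin n) (Fin n) F).map C with hp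
  set q : Matrix (Fin n) (Fin n) F[X] :=
    ((P⁻¹ : (Matrix (Fin n) (Fin n) F)ˣ) : Matrix (Fin n) (Fin n) F).map C with hq
  have hpq : p * q = 1 := by
    rw [hp, hq, ← Matrix.map_mul]
    have : (P : Matrix (Fin n) (Fin n) F) *
        ((P⁻¹ : (Matrix (Fin n) (Fin n) F)ˣ) : Matrix (Fin n) (Fin n) F) = 1 := by
      exact_mod_cast P.mul_inv
    rw [this]
    ext i j
    by_cases h : i = j <;> simp [h, Matrix.one_apply]
  have hqp : q * p = 1 := by
    rw [hq, hp, ← Matrix.map_mul]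
    have : ((P⁻¹ : (Matrix (Fin n) (Fin n) F)ˣ) : Matrix (Fin n) (Fin n) F) *
        (P : Matrix (Fin n) (Fin n) F) = 1 := by
      exact_mod_cast P.inv_mul
    rw [this]
    ext i j
    by_cases h : i = j <;> simp [h, Matrix.one_apply]
  have hmap : ((P : Matrix (Fin n) (Fin n) F) * M *
      ((P⁻¹ : (Matrix (Fin n) (Fin n) F)ˣ) : Matrix (Fin n) (Fin n) F)).map C
      = p * (M.map C) * q := by
    rw [hp, hq, ← Matrix.map_mul, ← Matrix.map_mul]
  have hchar : charmatrix ((P : Matrix (Fin n) (Fin n) F) * M *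
      ((P⁻¹ : (Matrix (Fin n) (Fin n) F)ˣ) : Matrix (Fin n) (Fin n) F))
      = p * (charmatrix M) * q := by
    rw [charmatrix, charmatrix, RingHom.mapMatrix_apply, RingHom.mapMatrix_apply, hmap,
      Matrix.mul_sub, Matrix.sub_mul]
    congr 1
    have hc := (Matrix.scalar_commute (n := Fin n) (X : F[X]) (fun r' => Commute.all _ _) p).eq
    rw [← hc, mul_assoc, hpq, mul_one]
  rw [Matrix.charpoly, Matrix.charpoly, hchar, Matrix.det_mul, Matrix.det_mul]
  have hdet : p.det * q.det = 1 := by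
    rw [← Matrix.det_mul, hpq, Matrix.det_one]
  calc p.det * (charmatrix M).det * q.det
      = p.det * q.det * (charmatrix M).det := by ring
    _ = (charmatrix M).det := by rw [hdet, one_mul]

/-- If `X ^ 2 - C l` divides the characteristic polynomial and `l` is not a square,
then the matrix is not triangularizable. -/
lemma aux_key {F : Type*} [Field F] {l : F} (hl : ∀ x : F, x ^ 2 ≠ l) {n : ℕ}
    {A : Matrix (Fin n) (Fin n) F} (hdvd : (X ^ 2 - C l) ∣ A.charpoly) :
    ¬ A.Triangularizable := by
  rintro ⟨P, hP⟩
  set T : Matrix (Fin n) (Fin n) F := (P : Matrix (Fin n) (Fin n) F) * A *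
    ((P⁻¹ : (Matrix (Fin n) (Fin n) F)ˣ) : Matrix (Fin n) (Fin n) F) with hT
  have h1 : A.charpoly = ∏ i : Fin n, (X - C (T i i)) := by
    rw [← aux_charpoly_conj P A, ← hT, Matrix.charpoly,
      Matrix.det_of_upperTriangular hP.charmatrix]
    exact Finset.prod_congr rfl fun i _ => by rw [charmatrix_apply_eq]
  have hsplits : A.charpoly.Splits := by
    rw [h1]
    exact Splits.prod fun i _ => Splits.X_sub_C _
  have hne : A.charpoly ≠ 0 := (Matrix.charpoly_monic A).ne_zero
  have hs2 : (X ^ 2 - C l).Splits :=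
    Splits.of_dvd hsplits hne hdvd
  have hdeg : (X ^ 2 - C l).degree ≠ 0 := by
    rw [Polynomial.degree_X_pow_sub_C (by norm_num)]
    norm_num
  obtain ⟨r, hr⟩ := Splits.exists_eval_eq_zero hs2 hdeg
  apply hl r
  have h := hr
  rw [Polynomial.eval_sub, Polynomial.eval_pow, Polynomial.eval_X, Polynomial.eval_C,
    sub_eq_zero] at h
  exact h

theorem stmt_12 {F : Type*} [Field F] [CharP F 2]
    (hNRC : ¬ Function.Surjective fun x : F => x ^ 2) :
    (∃ A : Matrix (Fin 3) (Fin 3) F, A.IsSymm ∧ ¬ A.Triangularizable) ∧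
    ∀ n : ℕ, 3 ≤ n → ∃ A : Matrix (Fin n) (Fin n) F, A.IsSymm ∧
      ¬ A.Triangularizable := by
  rw [Function.Surjective] at hNRC
  push_neg at hNRC
  obtain ⟨l, hl0⟩ := hNRC
  have hl : ∀ x : F, x ^ 2 ≠ l := fun x => by simpa using hl0 x
  -- our symmetric matrix
  set M : Matrix (Fin 3) (Fin 3) F := !![l, l, 0; l, l + 1, 1; 0, 1, 1] with hM
  have hMsymm : M.IsSymm := by
    rw [Matrix.IsSymm]
    ext i j
    fin_cases i <;> fin_cases j <;> simp [hM]
  have htwo : (2 : F) = 0 := by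
    have := CharP.cast_eq_zero F 2
    exact_mod_cast this
  have hchar : M.charpoly = X * (X ^ 2 - C l) := by
    have h0 : charmatrix M =
        !![X - C l, -C l, 0; -C l, X - (C l + 1), -1; 0, -1, X - 1] := by
      ext i j
      fin_cases i <;> fin_cases j <;>
        simp [hM, charmatrix_apply_eq, charmatrix_apply_ne, Fin.ext_iff, map_add,
          _root_.map_one, Matrix.vecHead, Matrix.vecTail]
    rw [Matrix.charpoly, h0, Matrix.det_fin_three]
    norm_num [Matrix.cons_val_zero, Matrix.cons_val_one, Matrix.cons_val_two, Matrix.head_cons,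
      Matrix.vecHead, Matrix.vecTail]
    have hC2 : (2 : F[X]) = 0 := by
      have : (2 : F[X]) = C (2 : F) := (map_ofNat C 2).symm
      rw [this, htwo, map_zero]
    linear_combination (-(1 + C l) * X ^ 2 + 2 * C l * X) * hC2
  have hdvdM : (X ^ 2 - C l) ∣ M.charpoly := by
    rw [hchar]; exact Dvd.intro_left X rfl
  refine ⟨⟨M, hMsymm, aux_key hl hdvdM⟩, ?_⟩
  intro n hn
  -- embed M into an n × n matrix
  set e : Fin 3 ⊕ Fin (n - 3) ≃ Fin n :=
    finSumFinEquiv.trans (finCongr (by omega)) with he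
  set B : Matrix (Fin 3 ⊕ Fin (n - 3)) (Fin 3 ⊕ Fin (n - 3)) F :=
    Matrix.fromBlocks M 0 0 0 with hB
  refine ⟨Matrix.reindex e e B, ?_, ?_⟩
  · rw [Matrix.IsSymm]
    have : (Matrix.reindex e e B)ᵀ = Matrix.reindex e e Bᵀ := by
      ext i j
      simp [Matrix.reindex_apply, Matrix.transpose_apply]
    rw [this, hB, Matrix.fromBlocks_transpose, hMsymm]
    simp
  · apply aux_key hl
    rw [Matrix.charpoly_reindex, hB, Matrix.charpoly_fromBlocks_zero₂₁]
    exact Dvd.dvd.mul_right hdvdM _
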